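/- If 0 < μ₁ ≤ μ₂ and δ > 0, then G(μ₁, μ₂δ/μ₁) ≤ G(μ₂, δ). -/

import Mathlib

/-- The Chernoff–Hoeffding bound function `G(μ, δ) = (e^δ / (1+δ)^(1+δ))^μ`. -/
noncomputable def chernoffG (μ δ : ℝ) : ℝ :=
  (Real.exp δ / (1 + δ) ^ (1 + δ)) ^ μ

lemma chernoffG_eq (μ δ : ℝ) (h : 0 < 1 + δ) :
    chernoffG μ δ = Real.exp (μ * (δ - (1 + δ) * Real.log (1 + δ))) := by
  unfold chernoffG
  rw [Real.rpow_def_of_pos (by positivity),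
    Real.log_div (Real.exp_ne_zero _) (by positivity),
    Real.log_exp, Real.log_rpow h, mul_comm]

/-- If `0 < μ₁ ≤ μ₂` and `δ > 0`, then `G(μ₁, μ₂δ/μ₁) ≤ G(μ₂, δ)`. -/
theorem chernoffG_mono (μ₁ μ₂ δ : ℝ) (hμ₁ : 0 < μ₁) (hμ : μ₁ ≤ μ₂) (hδ : 0 < δ) :
    chernoffG μ₁ (μ₂ * δ / μ₁) ≤ chernoffG μ₂ δ := by
  have hμ₂ : 0 < μ₂ := hμ₁.trans_le hμ
  set δ' := μ₂ * δ / μ₁ with hδ'def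
  have hδ' : 0 < δ' := by positivity
  have hkey : μ₁ * δ' = μ₂ * δ := by rw [hδ'def]; field_simp
  have hδle : δ ≤ δ' := by
    rw [hδ'def, le_div_iff₀ hμ₁]; nlinarith
  have ha : 0 < 1 + δ := by linarith
  have ha' : 0 < 1 + δ' := by linarith
  rw [chernoffG_eq _ _ ha', chernoffG_eq _ _ ha, Real.exp_le_exp]
  have hloga : Real.log (1 + δ) ≤ δ := by
    have := Real.log_le_sub_one_of_pos ha; linarith
  have hlog2 : 1 - (1 + δ) / (1 + δ') ≤ Real.log (1 + δ') - Real.log (1 + δ) := by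
    have h1 : Real.log ((1 + δ) / (1 + δ')) ≤ (1 + δ) / (1 + δ') - 1 :=
      Real.log_le_sub_one_of_pos (by positivity)
    rw [Real.log_div ha.ne' ha'.ne'] at h1
    linarith
  have h2 : μ₁ * (1 + δ') * (1 - (1 + δ) / (1 + δ')) = μ₁ * (δ' - δ) := by
    field_simp; ring
  have H1 : (μ₂ - μ₁) * Real.log (1 + δ) ≤
      μ₁ * (1 + δ') * (Real.log (1 + δ') - Real.log (1 + δ)) := by
    calc (μ₂ - μ₁) * Real.log (1 + δ) ≤ (μ₂ - μ₁) * δ :=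
          mul_le_mul_of_nonneg_left hloga (by linarith)
      _ = μ₁ * (δ' - δ) := by nlinarith [hkey]
      _ = μ₁ * (1 + δ') * (1 - (1 + δ) / (1 + δ')) := h2.symm
      _ ≤ μ₁ * (1 + δ') * (Real.log (1 + δ') - Real.log (1 + δ)) :=
          mul_le_mul_of_nonneg_left hlog2 (by positivity)
  have h3 : μ₁ * δ' * Real.log (1 + δ) = μ₂ * δ * Real.log (1 + δ) := by rw [hkey]
  nlinarith [H1, h3, hkey]
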